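/- If the path is not absolutely continuous, the random-walk rate function is infinite. Let μ be a finite signed Borel measure on [0,T] which is not absolutely continuous with respect to Lebesgue measure, and let w⁺, w⁻: [0,T] → [0,M] be Borel measurable. Then sup over a ∈ C¹([0,T]) of { ∫₀ᵀ a(t) dμ(t) − ∫₀ᵀ ( w⁺(t)(e^{a(t)} − 1) + w⁻(t)(e^{−a(t)} − 1) ) dt } = +∞. -/

import Mathlib

open MeasureTheory Manifold

noncomputable section

/-- A `C¹` bump: `1` on a compact `K`, `0` outside an open `U ⊇ K`, values in `[0,1]`. -/
private lemma exists_bump {K U : Set ℝ} (hK : IsCompact K) (hU : IsOpen U) (hKU : K ⊆ U) :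
    ∃ f : ℝ → ℝ, ContDiff ℝ 1 f ∧ (∀ x, f x ∈ Set.Icc (0:ℝ) 1) ∧
      Set.EqOn f 1 K ∧ ∀ x ∉ U, f x = 0 := by
  obtain ⟨f, hf0, hf1, hf01⟩ := exists_contMDiffMap_zero_one_of_isClosed (𝓘(ℝ, ℝ)) (n := ⊤)
    hU.isClosed_compl hK.isClosed (disjoint_compl_left_iff.mpr hKU)
  refine ⟨f, ?_, hf01, hf1, fun x hx => hf0 hx⟩
  have := f.contMDiff
  rw [contMDiff_iff_contDiff] at this
  exact this.of_le (mod_cast le_top)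

/-- Key analytic step: if `p` charges a compact Lebesgue-null set not charged by `q`,
the rate functional is unbounded above. -/
private lemma key_aux (p q : Measure ℝ) [IsFiniteMeasure p] [IsFiniteMeasure q]
    {K : Set ℝ} (hKc : IsCompact K) (hvolK : volume K = 0) (hqK : q K = 0)
    (hpK : 0 < p K) {M : ℝ} (hM0 : 0 ≤ M) (T : ℝ)
    {wp wm : ℝ → ℝ} (hwpmeas : Measurable wp) (hwmmeas : Measurable wm)
    (hwp : ∀ t, wp t ∈ Set.Icc (0:ℝ) M) (hwm : ∀ t, wm t ∈ Set.Icc (0:ℝ) M) (C : ℝ) :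
    ∃ a : ℝ → ℝ, ContDiff ℝ 1 a ∧
      C < (∫ t, a t ∂p) - (∫ t, a t ∂q)
          - ∫ t in Set.Ioc 0 T, (wp t * (Real.exp (a t) - 1) + wm t * (Real.exp (-a t) - 1)) := by
  set c := (p K).toReal with hc_def
  have hc : 0 < c := ENNReal.toReal_pos hpK.ne' (measure_ne_top p K)
  set L : ℝ := max 1 ((C + M + 1) * (2 / c)) with hL_def
  have hL1 : (1:ℝ) ≤ L := le_max_left _ _
  have hL0 : (0:ℝ) ≤ L := zero_le_one.trans hL1
  have hLC : C + M + 1 ≤ L * c / 2 := by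
    have h2 : (C + M + 1) * (2 / c) ≤ L := le_max_right _ _
    have h3 := mul_le_mul_of_nonneg_right h2 (le_of_lt (by positivity : (0:ℝ) < c / 2))
    calc C + M + 1 = (C + M + 1) * (2 / c) * (c / 2) := by field_simp
      _ ≤ L * (c / 2) := h3
      _ = L * c / 2 := by ring
  -- choose a small open neighborhood of K
  have hq_half : q K < ENNReal.ofReal (c / 2) := by
    rw [hqK]; exact ENNReal.ofReal_pos.mpr (by positivity)
  obtain ⟨U1, hKU1, hU1open, hU1q⟩ := Set.exists_isOpen_lt_of_lt K _ hq_half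
  have hvol_lt : volume K < ENNReal.ofReal (Real.exp (-L)) := by
    rw [hvolK]; exact ENNReal.ofReal_pos.mpr (Real.exp_pos _)
  obtain ⟨U2, hKU2, hU2open, hU2vol⟩ := Set.exists_isOpen_lt_of_lt K _ hvol_lt
  set U := U1 ∩ U2 with hU_def
  have hUopen : IsOpen U := hU1open.inter hU2open
  have hUmeas : MeasurableSet U := hUopen.measurableSet
  have hKU : K ⊆ U := Set.subset_inter hKU1 hKU2
  have hUq : q U < ENNReal.ofReal (c / 2) :=
    lt_of_le_of_lt (measure_mono Set.inter_subset_left) hU1q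
  have hUvol : volume U < ENNReal.ofReal (Real.exp (-L)) :=
    lt_of_le_of_lt (measure_mono Set.inter_subset_right) hU2vol
  -- the bump and the test function
  obtain ⟨f, hfcd, hf01, hf1, hf0⟩ := exists_bump hKc hUopen hKU
  set a : ℝ → ℝ := fun t => L * f t with ha_def
  have ha_cd : ContDiff ℝ 1 a := contDiff_const.mul hfcd
  have ha_nonneg : ∀ t, 0 ≤ a t := fun t => mul_nonneg hL0 (hf01 t).1
  have ha_le : ∀ t, a t ≤ L := fun t => mul_le_of_le_one_right hL0 (hf01 t).2
  have haK : ∀ t ∈ K, a t = L := fun t ht => by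
    simp only [ha_def]; rw [hf1 ht]; simp
  have haU : ∀ t ∉ U, a t = 0 := fun t ht => by
    simp only [ha_def]; rw [hf0 t ht, mul_zero]
  have ha_cont : Continuous a := ha_cd.continuous
  have ha_meas : Measurable a := ha_cont.measurable
  have ha_norm : ∀ t, ‖a t‖ ≤ L := fun t => by
    rw [Real.norm_eq_abs, abs_of_nonneg (ha_nonneg t)]; exact ha_le t
  have ha_int_p : Integrable a p :=
    ⟨ha_cont.aestronglyMeasurable, HasFiniteIntegral.of_bounded (ae_of_all _ ha_norm)⟩
  have ha_int_q : Integrable a q :=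
    ⟨ha_cont.aestronglyMeasurable, HasFiniteIntegral.of_bounded (ae_of_all _ ha_norm)⟩
  -- lower bound for the `p`-integral
  have h1 : L * c ≤ ∫ t, a t ∂p := by
    have hKm : MeasurableSet K := hKc.isClosed.measurableSet
    have hKint : ∫ t in K, a t ∂p = L * c := by
      rw [setIntegral_congr_fun hKm (fun t ht => haK t ht), setIntegral_const, smul_eq_mul, measureReal_def,
        ← hc_def, mul_comm]
    calc L * c = ∫ t in K, a t ∂p := hKint.symm
      _ ≤ ∫ t, a t ∂p := setIntegral_le_integral ha_int_p (ae_of_all _ ha_nonneg)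
  -- upper bound for the `q`-integral
  have h2 : ∫ t, a t ∂q ≤ L * (c / 2) := by
    rw [← setIntegral_eq_integral_of_forall_compl_eq_zero (fun t ht => haU t ht) (μ := q)]
    have hqU_real : (q U).toReal ≤ c / 2 :=
      (ENNReal.toReal_lt_of_lt_ofReal hUq).le
    calc ∫ t in U, a t ∂q ≤ ∫ t in U, L ∂q := by
          refine setIntegral_mono_on ha_int_q.integrableOn ?_ hUmeas (fun t _ => ha_le t)
          exact integrableOn_const (measure_lt_top q U).ne
      _ = (q U).toReal * L := by rw [setIntegral_const, smul_eq_mul, measureReal_def]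
      _ ≤ (c / 2) * L := mul_le_mul_of_nonneg_right hqU_real hL0
      _ = L * (c / 2) := mul_comm _ _
  -- the penalty term
  set g : ℝ → ℝ := fun t => wp t * (Real.exp (a t) - 1) + wm t * (Real.exp (-a t) - 1)
    with hg_def
  have hg_meas : Measurable g :=
    (hwpmeas.mul ((Real.measurable_exp.comp ha_meas).sub measurable_const)).add
      (hwmmeas.mul ((Real.measurable_exp.comp ha_meas.neg).sub measurable_const))
  have hexp_bounds : ∀ t, 1 ≤ Real.exp (a t) ∧ Real.exp (a t) ≤ Real.exp L
      ∧ 0 < Real.exp (-a t) ∧ Real.exp (-a t) ≤ 1 := fun t =>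
    ⟨Real.one_le_exp (ha_nonneg t), Real.exp_le_exp.mpr (ha_le t), Real.exp_pos _,
      by calc Real.exp (-a t) ≤ Real.exp 0 :=
            Real.exp_le_exp.mpr (neg_nonpos.mpr (ha_nonneg t))
          _ = 1 := Real.exp_zero⟩
  have hg_norm : ∀ t, ‖g t‖ ≤ M * Real.exp L + M := fun t => by
    obtain ⟨e1, e2, e3, e4⟩ := hexp_bounds t
    have b1 : |wp t * (Real.exp (a t) - 1)| ≤ M * Real.exp L := by
      rw [abs_mul, abs_of_nonneg (hwp t).1, abs_of_nonneg (by linarith : (0:ℝ) ≤ Real.exp (a t) - 1)]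
      have := (hwp t).2
      nlinarith [Real.exp_pos (a t)]
    have b2 : |wm t * (Real.exp (-a t) - 1)| ≤ M := by
      rw [abs_mul, abs_of_nonneg (hwm t).1]
      have h5 : |Real.exp (-a t) - 1| ≤ 1 := by rw [abs_le]; constructor <;> linarith
      have := (hwm t).2
      nlinarith [(hwm t).1, abs_nonneg (Real.exp (-a t) - 1)]
    calc ‖g t‖ ≤ |wp t * (Real.exp (a t) - 1)| + |wm t * (Real.exp (-a t) - 1)| :=
          abs_add_le _ _
      _ ≤ M * Real.exp L + M := add_le_add b1 b2
  have hIoc_fin : volume (Set.Ioc (0:ℝ) T) < ⊤ := measure_Ioc_lt_top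
  haveI : Fact (volume (Set.Ioc (0:ℝ) T) < ⊤) := ⟨hIoc_fin⟩
  have hg_int : IntegrableOn g (Set.Ioc 0 T) :=
    ⟨hg_meas.aestronglyMeasurable.restrict,
      HasFiniteIntegral.of_bounded (ae_of_all _ hg_norm)⟩
  -- pointwise domination of the penalty by an indicator
  set h : ℝ → ℝ := Set.indicator U (fun _ => M * Real.exp L) with hh_def
  have hgh : ∀ t, g t ≤ h t := by
    intro t
    by_cases htU : t ∈ U
    · rw [hh_def, Set.indicator_of_mem htU]
      obtain ⟨e1, e2, e3, e4⟩ := hexp_bounds t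
      have w1 := (hwp t).1; have w2 := (hwp t).2
      have w3 := (hwm t).1; have w4 := (hwm t).2
      simp only [hg_def]
      nlinarith [Real.exp_pos L, mul_nonneg w3 (by linarith : (0:ℝ) ≤ 1 - Real.exp (-a t))]
    · rw [hh_def, Set.indicator_of_notMem htU]
      have h0 : a t = 0 := haU t htU
      simp only [hg_def, h0, neg_zero, Real.exp_zero, sub_self, mul_zero, add_zero, le_refl]
  have hh_int : IntegrableOn h (Set.Ioc 0 T) := by
    refine Integrable.indicator ?_ hUmeas
    exact integrableOn_const hIoc_fin.ne
  have h3 : ∫ t in Set.Ioc 0 T, g t ≤ M := by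
    have hvol_real : (volume (Set.Ioc (0:ℝ) T ∩ U)).toReal ≤ Real.exp (-L) := by
      refine ENNReal.toReal_le_of_le_ofReal (Real.exp_pos _).le ?_
      exact (lt_of_le_of_lt (measure_mono Set.inter_subset_right) hUvol).le
    calc ∫ t in Set.Ioc 0 T, g t ≤ ∫ t in Set.Ioc 0 T, h t := integral_mono hg_int hh_int hgh
      _ = ∫ t in Set.Ioc 0 T ∩ U, (M * Real.exp L) := setIntegral_indicator hUmeas
      _ = (volume (Set.Ioc 0 T ∩ U)).toReal * (M * Real.exp L) := by
          rw [setIntegral_const, smul_eq_mul, measureReal_def]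
      _ ≤ Real.exp (-L) * (M * Real.exp L) := by
          exact mul_le_mul_of_nonneg_right hvol_real (by positivity)
      _ = M * (Real.exp (-L) * Real.exp L) := by ring
      _ = M := by rw [← Real.exp_add, neg_add_cancel, Real.exp_zero, mul_one]
  refine ⟨a, ha_cd, ?_⟩
  have : C + M + 1 - M ≤ L * c - L * (c / 2) - M := by linarith
  linarith [h1, h2, h3]

/-- If the path is not absolutely continuous (i.e. its Stieltjes
measure `μ` charges some Lebesgue-null set), then the random-walk rate function
is infinite:
`sup_{a ∈ C¹} { ∫ a dμ − ∫₀ᵀ ( w⁺(e^a − 1) + w⁻(e^{−a} − 1) ) dt } = +∞`. -/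
theorem not_absolutely_continuous_infinite_rate (T M : ℝ) (hT : 0 < T) (hM : 0 < M)
    (μ : SignedMeasure ℝ)
    (hconc : ∀ s : Set ℝ, MeasurableSet s → s ∩ Set.Icc 0 T = ∅ → μ s = 0)
    (hsing : ∃ s : Set ℝ, MeasurableSet s ∧ volume s = 0 ∧ μ s ≠ 0)
    (wp wm : ℝ → ℝ) (hwpmeas : Measurable wp) (hwmmeas : Measurable wm)
    (hwp : ∀ t, wp t ∈ Set.Icc (0 : ℝ) M) (hwm : ∀ t, wm t ∈ Set.Icc (0 : ℝ) M) :
    sSup {v : EReal | ∃ a : ℝ → ℝ, ContDiff ℝ 1 a ∧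
        v = ((((∫ t, a t ∂μ.toJordanDecomposition.posPart)
              - (∫ t, a t ∂μ.toJordanDecomposition.negPart)
              - ∫ t in Set.Ioc 0 T,
                  (wp t * (Real.exp (a t) - 1) + wm t * (Real.exp (-a t) - 1))) : ℝ) : EReal)}
      = ⊤ := by
  rw [sSup_eq_top]
  intro b hb
  obtain ⟨C, hC⟩ : ∃ C : ℝ, b < (C : EReal) := by
    induction b with
    | bot => exact ⟨0, EReal.bot_lt_coe 0⟩
    | coe x => exact ⟨x + 1, by exact_mod_cast lt_add_one x⟩
    | top => exact absurd hb (lt_irrefl _)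
  set jd := μ.toJordanDecomposition with hjd
  haveI : IsFiniteMeasure jd.posPart := jd.posPart_finite
  haveI : IsFiniteMeasure jd.negPart := jd.negPart_finite
  obtain ⟨s, hs_meas, hs_vol, hs_ne⟩ := hsing
  have hμs : μ s = (jd.posPart s).toReal - (jd.negPart s).toReal := by
    conv_lhs => rw [← μ.toSignedMeasure_toJordanDecomposition]
    rw [JordanDecomposition.toSignedMeasure, Measure.toSignedMeasure_sub_apply hs_meas,
      measureReal_def, measureReal_def]
  obtain ⟨u, hu_meas, hu_pos, hu_neg⟩ := jd.mutuallySingular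
  have hkey : 0 < jd.posPart s ∨ 0 < jd.negPart s := by
    by_contra hcon
    push_neg at hcon
    obtain ⟨h1, h2⟩ := hcon
    rw [le_zero_iff] at h1 h2
    rw [hμs, h1, h2] at hs_ne
    simp at hs_ne
  rcases hkey with hpos | hneg
  · -- positive part charges a null set
    set s' := s \ u with hs'
    have hs'_meas : MeasurableSet s' := hs_meas.diff hu_meas
    have hs'_vol : volume s' = 0 := measure_mono_null Set.diff_subset hs_vol
    have hs'_neg : jd.negPart s' = 0 :=
      measure_mono_null (fun x hx => hx.2) hu_neg
    have hs'_pos : 0 < jd.posPart s' := by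
      have hsum := measure_inter_add_diff s hu_meas (μ := jd.posPart)
      have hzero : jd.posPart (s ∩ u) = 0 :=
        measure_mono_null Set.inter_subset_right hu_pos
      rw [hzero, zero_add] at hsum
      rwa [← hsum] at hpos
    obtain ⟨K, hKs', hKc, hKlt⟩ := hs'_meas.exists_isCompact_lt_add
      (measure_ne_top jd.posPart s') hs'_pos.ne'
    have hKpos : 0 < jd.posPart K := by
      by_contra hcon
      push_neg at hcon
      rw [le_zero_iff] at hcon
      rw [hcon, zero_add] at hKlt
      exact lt_irrefl _ hKlt
    have hKvol : volume K = 0 := measure_mono_null hKs' hs'_vol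
    have hKneg : jd.negPart K = 0 := measure_mono_null hKs' hs'_neg
    obtain ⟨a, hacd, haval⟩ := key_aux jd.posPart jd.negPart hKc hKvol hKneg hKpos
      hM.le T hwpmeas hwmmeas hwp hwm C
    exact ⟨_, ⟨a, hacd, rfl⟩, hC.trans (EReal.coe_lt_coe_iff.mpr haval)⟩
  · -- negative part charges a null set
    set s' := s ∩ u with hs'
    have hs'_meas : MeasurableSet s' := hs_meas.inter hu_meas
    have hs'_vol : volume s' = 0 := measure_mono_null Set.inter_subset_left hs_vol
    have hs'_pos0 : jd.posPart s' = 0 :=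
      measure_mono_null Set.inter_subset_right hu_pos
    have hs'_neg : 0 < jd.negPart s' := by
      have hsum := measure_inter_add_diff s hu_meas (μ := jd.negPart)
      have hzero : jd.negPart (s \ u) = 0 :=
        measure_mono_null (fun x hx => hx.2) hu_neg
      rw [hzero, add_zero] at hsum
      rwa [← hsum] at hneg
    obtain ⟨K, hKs', hKc, hKlt⟩ := hs'_meas.exists_isCompact_lt_add
      (measure_ne_top jd.negPart s') hs'_neg.ne'
    have hKpos : 0 < jd.negPart K := by
      by_contra hcon
      push_neg at hcon
      rw [le_zero_iff] at hcon
      rw [hcon, zero_add] at hKlt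
      exact lt_irrefl _ hKlt
    have hKvol : volume K = 0 := measure_mono_null hKs' hs'_vol
    have hKpos0 : jd.posPart K = 0 := measure_mono_null hKs' hs'_pos0
    obtain ⟨a, hacd, haval⟩ := key_aux jd.negPart jd.posPart hKc hKvol hKpos0 hKpos
      hM.le T hwmmeas hwpmeas hwm hwp C
    refine ⟨_, ⟨fun t => -(a t), hacd.neg, rfl⟩, ?_⟩
    have hEq : (∫ t, (fun t => -(a t)) t ∂jd.posPart) - (∫ t, (fun t => -(a t)) t ∂jd.negPart)
        - ∫ t in Set.Ioc 0 T, (wp t * (Real.exp ((fun t => -(a t)) t) - 1)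
            + wm t * (Real.exp (-(fun t => -(a t)) t) - 1))
        = (∫ t, a t ∂jd.negPart) - (∫ t, a t ∂jd.posPart)
          - ∫ t in Set.Ioc 0 T, (wm t * (Real.exp (a t) - 1)
              + wp t * (Real.exp (-a t) - 1)) := by
      simp only []
      rw [integral_neg, integral_neg]
      have hfun : (fun t => wp t * (Real.exp (-a t) - 1) + wm t * (Real.exp (-(-a t)) - 1))
          = fun t => wm t * (Real.exp (a t) - 1) + wp t * (Real.exp (-a t) - 1) := by
        funext t; rw [neg_neg]; ring
      rw [show (∫ t in Set.Ioc 0 T, (wp t * (Real.exp (-a t) - 1)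
            + wm t * (Real.exp (-(-a t)) - 1)))
          = ∫ t in Set.Ioc 0 T, (wm t * (Real.exp (a t) - 1)
            + wp t * (Real.exp (-a t) - 1)) from by rw [hfun]]
      ring
    have h5 : C < (∫ t, (fun t => -(a t)) t ∂jd.posPart)
        - (∫ t, (fun t => -(a t)) t ∂jd.negPart)
        - ∫ t in Set.Ioc 0 T, (wp t * (Real.exp ((fun t => -(a t)) t) - 1)
            + wm t * (Real.exp (-(fun t => -(a t)) t) - 1)) := by
      rw [hEq]; exact haval
    exact hC.trans (EReal.coe_lt_coe_iff.mpr h5)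

end
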